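/- For every Dyck path P of size n whose first corner is tracked by the involution φ (swapping the first bad corner): if P' = φ(P) ≠ P, then the first bad corner of P' occurs at the same position as the first bad corner of P, and it is a bad corner of the opposite type (peak vs valley). -/

import Mathlib

/-- A Dyck path of size `n`: a list of booleans (`true` = north step, `false` = east step)
from `(0,0)` to `(n,n)` staying weakly above the diagonal `y = x`. -/
def IsDyckPath (n : ℕ) (w : List Bool) : Prop :=
  w.length = 2 * n ∧ w.count true = n ∧
    ∀ k, (w.take k).count false ≤ (w.take k).count true

/-- The `y`-coordinate of the lattice point reached after `k` steps. -/
def ycoord (w : List Bool) (k : ℕ) : ℕ := (w.take k).count true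

/-- The `x`-coordinate of the lattice point reached after `k` steps. -/
def xcoord (w : List Bool) (k : ℕ) : ℕ := (w.take k).count false

/-- A peak: a north step at position `i` followed by an east step. -/
def IsPeak (w : List Bool) (i : ℕ) : Prop := w[i]? = some true ∧ w[i+1]? = some false

/-- A valley: an east step at position `i` followed by a north step. -/
def IsValley (w : List Bool) (i : ℕ) : Prop := w[i]? = some false ∧ w[i+1]? = some true

/-- Height above the diagonal after `k` steps. -/
def pdepth (w : List Bool) (k : ℕ) : ℤ := (ycoord w k : ℤ) - (xcoord w k : ℤ)

/-- Step `i` (a north step) of `w` is matched with step `j` (an east step):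
the facing east step at the same height (balanced-parentheses matching). -/
def Matches (w : List Bool) (i j : ℕ) : Prop :=
  i < j ∧ w[i]? = some true ∧ w[j]? = some false ∧
    pdepth w (j + 1) = pdepth w i ∧ ∀ k, i < k → k ≤ j → pdepth w i < pdepth w k

/-- The graph on `m` points whose edges are the upper arches and the lower arches;
its connected components are the components of the corresponding meander. -/
def meanderGraph (m : ℕ) (upper lower : ℕ → ℕ → Prop) : SimpleGraph (Fin m) where
  Adj i j := i ≠ j ∧ (upper i.1 j.1 ∨ upper j.1 i.1 ∨ lower i.1 j.1 ∨ lower j.1 i.1)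
  symm := by
    constructor
    intro i j h
    exact ⟨h.1.symm, by tauto⟩
  loopless := by
    constructor
    intro i h
    exact h.1 rfl

/-- The number of components of the meander with the matching of `P` above and the
matching of `Q` below. -/
noncomputable def trajPQ (n : ℕ) (P Q : List Bool) : ℕ :=
  Nat.card (meanderGraph (2 * n) (Matches P) (Matches Q)).ConnectedComponent

/-- The number of components of the meander with the matching of `P` above and the
rainbow matching `i ↦ 2n - 1 - i` below. -/
noncomputable def traj (n : ℕ) (P : List Bool) : ℕ :=
  Nat.card (meanderGraph (2 * n) (Matches P)
    (fun i j => i + j + 1 = 2 * n)).ConnectedComponent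

/-- No peak with even `y`-coordinate and no valley with odd `x`-coordinate. -/
def NoBadCorner (w : List Bool) : Prop :=
  (∀ i, IsPeak w i → Odd (ycoord w (i + 1))) ∧
  (∀ i, IsValley w i → Even (xcoord w (i + 1)))

/-- A bad corner: a peak with even `y`-coordinate or a valley with odd `x`-coordinate. -/
def IsBadCorner (w : List Bool) (i : ℕ) : Prop :=
  (IsPeak w i ∧ Even (ycoord w (i + 1))) ∨ (IsValley w i ∧ Odd (xcoord w (i + 1)))

/-- Interchange the two steps of the corner at positions `i`, `i+1`. -/
def swapCorner (w : List Bool) (i : ℕ) : List Bool :=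
  (w.set i (w.getD (i + 1) true)).set (i + 1) (w.getD i true)

open Classical in
/-- The involution `φ`: swap the two steps of the first bad corner, if any. -/
noncomputable def phiMap (w : List Bool) : List Bool :=
  if h : ∃ i, IsBadCorner w i then swapCorner w (Nat.find h) else w

/-- The number of unit squares between a Dyck path and the diagonal `y = x`. -/
def area (w : List Bool) : ℕ :=
  ((List.range w.length).map fun i =>
    if w.getD i true then 0 else ycoord w i - xcoord w i - 1).sum

/-- The zigzag Dyck path `(NE)^m`. -/
def zigzag (m : ℕ) : List Bool := (List.replicate m [true, false]).flatten

/-- `N^{2a_1} E^{2b_1} ⋯ N^{2a_t} E^{2b_t}` for `ab = [(a_1,b_1),…,(a_t,b_t)]`. -/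
def doubledWord (ab : List (ℕ × ℕ)) : List Bool :=
  (ab.map fun p => List.replicate (2 * p.1) true ++ List.replicate (2 * p.2) false).flatten

/-- `N^{a_1} E^{b_1} ⋯ N^{a_t} E^{b_t}` for `ab = [(a_1,b_1),…,(a_t,b_t)]`. -/
def halfWord (ab : List (ℕ × ℕ)) : List Bool :=
  (ab.map fun p => List.replicate p.1 true ++ List.replicate p.2 false).flatten

/-- All peaks at odd height (`height` = `y - x` at the peak's lattice point). -/
def AllPeaksOdd (w : List Bool) : Prop :=
  ∀ i, IsPeak w i → Odd (ycoord w (i + 1) - xcoord w (i + 1))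

/-- All peaks at even height. -/
def AllPeaksEven (w : List Bool) : Prop :=
  ∀ i, IsPeak w i → Even (ycoord w (i + 1) - xcoord w (i + 1))

/-- Steps of a Motzkin path: up, horizontal, down. -/
inductive MStep | U | H | D
deriving DecidableEq

/-- The total height change along a list of Motzkin steps. -/
def msum (l : List MStep) : ℤ :=
  (l.map fun s => match s with | MStep.U => 1 | MStep.H => 0 | MStep.D => -1).sum

/-- A Motzkin path of length `n`. -/
def IsMotzkin (n : ℕ) (l : List MStep) : Prop :=
  l.length = n ∧ msum l = 0 ∧ ∀ k, 0 ≤ msum (l.take k)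

/-- A Riordan path of length `n`: a Motzkin path with no horizontal step on the `x`-axis. -/
def IsRiordan (n : ℕ) (l : List MStep) : Prop :=
  IsMotzkin n l ∧ ∀ i, l[i]? = some MStep.H → msum (l.take i) ≠ 0

/-- The map `φ_A` from Dyck paths of size `n+1` (all peaks at odd height)
to Motzkin paths of length `n`: `v_j` is read off from steps `p_{2j} p_{2j+1}`. -/
def phiA (n : ℕ) (P : List Bool) : List MStep :=
  (List.range n).map fun j =>
    match P.getD (2 * j + 1) true, P.getD (2 * j + 2) true with
    | true, true => MStep.U
    | false, true => MStep.H
    | _, _ => MStep.D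

/-- The map `φ_B` from Dyck paths of size `n` (all peaks at even height)
to Riordan paths of length `n`: `u_j` is read off from steps `p_{2j-1} p_{2j}`. -/
def phiB (n : ℕ) (P : List Bool) : List MStep :=
  (List.range n).map fun j =>
    match P.getD (2 * j) true, P.getD (2 * j + 1) true with
    | true, true => MStep.U
    | false, true => MStep.H
    | _, _ => MStep.D

section FirstBadCornerAux

lemma take_set_le {α : Type*} (l : List α) {n m : ℕ} (a : α) (h : m ≤ n) :
    (l.set n a).take m = l.take m := by
  apply List.ext_getElem?; intro k
  simp only [List.getElem?_take]
  by_cases hk : k < m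
  · simp [hk, List.getElem?_set_ne (show n ≠ k by omega)]
  · simp [hk]

lemma take_swapCorner (P : List Bool) (i k : ℕ) (h : k ≤ i) :
    (swapCorner P i).take k = P.take k := by
  unfold swapCorner
  rw [take_set_le _ _ (by omega), take_set_le _ _ h]

lemma get?_swapCorner_ne (P : List Bool) (i k : ℕ) (h1 : k ≠ i) (h2 : k ≠ i + 1) :
    (swapCorner P i)[k]? = P[k]? := by
  unfold swapCorner
  rw [List.getElem?_set_ne (by omega), List.getElem?_set_ne (by omega)]

lemma get?_swapCorner_i (P : List Bool) (i : ℕ) {b : Bool} (hb : P[i + 1]? = some b) :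
    (swapCorner P i)[i]? = some b := by
  have hlen : i + 1 < P.length := (List.getElem?_eq_some_iff.mp hb).1
  unfold swapCorner
  rw [List.getElem?_set_ne (by omega), List.getElem?_set_self (by omega),
    List.getD_eq_getElem?_getD, hb]
  rfl

lemma get?_swapCorner_i1 (P : List Bool) (i : ℕ) {b c : Bool} (hb : P[i]? = some b)
    (hc : P[i + 1]? = some c) : (swapCorner P i)[i + 1]? = some b := by
  have hlen : i + 1 < P.length := (List.getElem?_eq_some_iff.mp hc).1
  unfold swapCorner
  rw [List.getElem?_set_self (by simpa using hlen), List.getD_eq_getElem?_getD, hb]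
  rfl

lemma ycoord_succ_true {w : List Bool} {j : ℕ} (h : w[j]? = some true) :
    ycoord w (j + 1) = ycoord w j + 1 := by
  unfold ycoord; rw [List.take_succ, h]; simp [List.count_append]

lemma ycoord_succ_false {w : List Bool} {j : ℕ} (h : w[j]? = some false) :
    ycoord w (j + 1) = ycoord w j := by
  unfold ycoord; rw [List.take_succ, h]; simp [List.count_append]

lemma xcoord_succ_true {w : List Bool} {j : ℕ} (h : w[j]? = some true) :
    xcoord w (j + 1) = xcoord w j := by
  unfold xcoord; rw [List.take_succ, h]; simp [List.count_append]

lemma xcoord_succ_false {w : List Bool} {j : ℕ} (h : w[j]? = some false) :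
    xcoord w (j + 1) = xcoord w j + 1 := by
  unfold xcoord; rw [List.take_succ, h]; simp [List.count_append]

lemma ycoord_swapCorner (P : List Bool) (i k : ℕ) (h : k ≤ i) :
    ycoord (swapCorner P i) k = ycoord P k := by
  unfold ycoord; rw [take_swapCorner P i k h]

lemma xcoord_swapCorner (P : List Bool) (i k : ℕ) (h : k ≤ i) :
    xcoord (swapCorner P i) k = xcoord P k := by
  unfold xcoord; rw [take_swapCorner P i k h]

/-- The key parity invariant: strictly before the first bad corner, after every north
step the `x`-coordinate is even, and after every east step the `y`-coordinate is odd. -/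
lemma key_parity (P : List Bool) (hD : ∀ k, xcoord P k ≤ ycoord P k) :
    ∀ j, (∀ k < j, ¬ IsBadCorner P k) →
      (P[j]? = some true → Even (xcoord P (j + 1))) ∧
      (P[j]? = some false → Odd (ycoord P (j + 1))) := by
  intro j
  induction j with
  | zero =>
    intro _
    constructor
    · intro h
      rw [xcoord_succ_true h]
      simp [xcoord]
    · intro h
      exfalso
      have h1 := hD 1
      have e1 : xcoord P (0 + 1) = xcoord P 0 + 1 := xcoord_succ_false h
      have e2 : ycoord P (0 + 1) = ycoord P 0 := ycoord_succ_false h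
      simp only [Nat.zero_add] at e1 e2
      have e3 : xcoord P 0 = 0 := by simp [xcoord]
      have e4 : ycoord P 0 = 0 := by simp [ycoord]
      omega
  | succ j ih =>
    intro hg
    have hg' : ∀ k < j, ¬ IsBadCorner P k := fun k hk => hg k (Nat.lt_succ_of_lt hk)
    have ihs := ih hg'
    have hprev : ∀ {c : Bool}, P[j + 1]? = some c → ∃ b : Bool, P[j]? = some b := by
      intro c hc
      have hlen : j + 1 < P.length := (List.getElem?_eq_some_iff.mp hc).1
      exact ⟨P[j], List.getElem?_eq_getElem (by omega)⟩
    constructor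
    · intro hc
      rw [xcoord_succ_true hc]
      obtain ⟨b, hb⟩ := hprev hc
      cases b with
      | true => exact ihs.1 hb
      | false =>
        have hnb : ¬ Odd (xcoord P (j + 1)) :=
          fun ho => hg j (Nat.lt_succ_self j) (Or.inr ⟨⟨hb, hc⟩, ho⟩)
        exact Nat.not_odd_iff_even.mp hnb
    · intro hc
      rw [ycoord_succ_false hc]
      obtain ⟨b, hb⟩ := hprev hc
      cases b with
      | false => exact ihs.2 hb
      | true =>
        have hnb : ¬ Even (ycoord P (j + 1)) :=
          fun he => hg j (Nat.lt_succ_self j) (Or.inl ⟨⟨hb, hc⟩, he⟩)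
        exact Nat.not_even_iff_odd.mp hnb

end FirstBadCornerAux

/-- If `i` is the position of the first bad corner of a Dyck path `P`, then after swapping
the two steps at `i`, the resulting path has its first bad corner at the same position `i`,
of the opposite type. -/

theorem first_bad_corner_swap (n : ℕ) (P : List Bool) (hP : IsDyckPath n P) (i : ℕ)
    (hi : IsBadCorner P i) (hmin : ∀ j < i, ¬ IsBadCorner P j) :
    IsBadCorner (swapCorner P i) i ∧ (∀ j < i, ¬ IsBadCorner (swapCorner P i) j) ∧
    (IsPeak P i → IsValley (swapCorner P i) i) ∧
    (IsValley P i → IsPeak (swapCorner P i) i) := by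
  have hD : ∀ k, xcoord P k ≤ ycoord P k := fun k => hP.2.2 k
  have hkey := key_parity P hD i hmin
  rcases hi with ⟨⟨hT, hF⟩, hy⟩ | ⟨⟨hF, hT⟩, hx⟩
  · -- bad peak at `i`
    have hwI : (swapCorner P i)[i]? = some false := get?_swapCorner_i P i hF
    have hwI1 : (swapCorner P i)[i + 1]? = some true := get?_swapCorner_i1 P i hT hF
    have hval : IsValley (swapCorner P i) i := ⟨hwI, hwI1⟩
    have hxw : xcoord (swapCorner P i) (i + 1) = xcoord P i + 1 := by
      rw [xcoord_succ_false hwI, xcoord_swapCorner P i i le_rfl]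
    have hxPi : Even (xcoord P i) := by
      have h := hkey.1 hT
      rwa [xcoord_succ_true hT] at h
    have hoddx : Odd (xcoord (swapCorner P i) (i + 1)) := by
      rw [hxw]; exact hxPi.add_one
    refine ⟨Or.inr ⟨hval, hoddx⟩, ?_, fun _ => hval, fun hv => ?_⟩
    · intro j hj hbad
      rcases Nat.lt_or_ge (j + 1) i with hj1 | hj1
      · apply hmin j hj
        have e1 : (swapCorner P i)[j]? = P[j]? := get?_swapCorner_ne P i j (by omega) (by omega)
        have e2 : (swapCorner P i)[j + 1]? = P[j + 1]? :=
          get?_swapCorner_ne P i (j + 1) (by omega) (by omega)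
        have e3 := ycoord_swapCorner P i (j + 1) (by omega)
        have e4 := xcoord_swapCorner P i (j + 1) (by omega)
        unfold IsBadCorner IsPeak IsValley at hbad ⊢
        rw [e1, e2, e3, e4] at hbad
        exact hbad
      · have hji : j + 1 = i := by omega
        subst hji
        rcases hbad with ⟨⟨h1, h2⟩, he⟩ | ⟨⟨h1, h2⟩, ho⟩
        · rw [ycoord_swapCorner P (j + 1) (j + 1) le_rfl] at he
          rw [ycoord_succ_true hT] at hy
          exact (Nat.even_add_one.mp hy) he
        · rw [hwI] at h2
          simp at h2
    · rw [hv.1] at hT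
      simp at hT
  · -- bad valley at `i`
    have hwI : (swapCorner P i)[i]? = some true := get?_swapCorner_i P i hT
    have hwI1 : (swapCorner P i)[i + 1]? = some false := get?_swapCorner_i1 P i hF hT
    have hpk : IsPeak (swapCorner P i) i := ⟨hwI, hwI1⟩
    have hyw : ycoord (swapCorner P i) (i + 1) = ycoord P i + 1 := by
      rw [ycoord_succ_true hwI, ycoord_swapCorner P i i le_rfl]
    have hyPi : Odd (ycoord P i) := by
      have h := hkey.2 hF
      rwa [ycoord_succ_false hF] at h
    have heveny : Even (ycoord (swapCorner P i) (i + 1)) := by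
      rw [hyw]; exact hyPi.add_one
    refine ⟨Or.inl ⟨hpk, heveny⟩, ?_, fun hp => by rw [hp.1] at hF; simp at hF, fun _ => hpk⟩
    · intro j hj hbad
      rcases Nat.lt_or_ge (j + 1) i with hj1 | hj1
      · apply hmin j hj
        have e1 : (swapCorner P i)[j]? = P[j]? := get?_swapCorner_ne P i j (by omega) (by omega)
        have e2 : (swapCorner P i)[j + 1]? = P[j + 1]? :=
          get?_swapCorner_ne P i (j + 1) (by omega) (by omega)
        have e3 := ycoord_swapCorner P i (j + 1) (by omega)
        have e4 := xcoord_swapCorner P i (j + 1) (by omega)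
        unfold IsBadCorner IsPeak IsValley at hbad ⊢
        rw [e1, e2, e3, e4] at hbad
        exact hbad
      · have hji : j + 1 = i := by omega
        subst hji
        rcases hbad with ⟨⟨h1, h2⟩, he⟩ | ⟨⟨h1, h2⟩, ho⟩
        · rw [hwI] at h2
          simp at h2
        · rw [xcoord_swapCorner P (j + 1) (j + 1) le_rfl] at ho
          rw [xcoord_succ_false hF] at hx
          exact Nat.odd_add_one.mp hx ho
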